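/- Let Φ ∈ ℝ^{M×N}, y ∈ ℝ^M, let Λ_i ⊆ Λ_l ⊆ {1,…,N}, and let x'_i and x'_l be least-squares estimates of y on Λ_i and Λ_l respectively. Then ‖y − Φx'_l‖ ≤ ‖y − Φx'_i‖. Moreover, if y = Φx for some x ∈ ℝ^N and Φ has restricted isometry constant δ_s of order s ≥ |Λ_i ∪ supp(x)|, then 0 ≤ ‖y − Φx'_i‖² − ‖y − Φx'_l‖² ≤ (1 + δ_s)·‖x'_i − x‖². -/
import Mathlib


open Finset

noncomputable section

/-- The Euclidean (ℓ₂) norm of a vector in `Fin n → ℝ`. -/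
def l2norm {n : ℕ} (v : Fin n → ℝ) : ℝ := Real.sqrt (∑ i, (v i) ^ 2)

/-- The sparsity `‖v‖₀` of a vector: the number of its nonzero entries. -/
def sparsity {n : ℕ} (v : Fin n → ℝ) : ℕ := (Finset.univ.filter fun i => v i ≠ 0).card

/-- The support of a vector, as a `Finset`. -/
def suppF {n : ℕ} (v : Fin n → ℝ) : Finset (Fin n) := Finset.univ.filter fun i => v i ≠ 0

/-- `restr v S` is the vector agreeing with `v` on `S` and zero outside `S`. -/
def restr {n : ℕ} (v : Fin n → ℝ) (S : Finset (Fin n)) : Fin n → ℝ :=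
  fun i => if i ∈ S then v i else 0

/-- `Φ` has restricted isometry constant `δ < 1` of order `s`:
`(1-δ)‖z‖² ≤ ‖Φz‖² ≤ (1+δ)‖z‖²` for every `s`-sparse `z`. -/
def HasRIC {M N : ℕ} (Φ : Matrix (Fin M) (Fin N) ℝ) (s : ℕ) (δ : ℝ) : Prop :=
  δ < 1 ∧ ∀ z : Fin N → ℝ, sparsity z ≤ s →
    (1 - δ) * (l2norm z) ^ 2 ≤ (l2norm (Φ.mulVec z)) ^ 2 ∧
      (l2norm (Φ.mulVec z)) ^ 2 ≤ (1 + δ) * (l2norm z) ^ 2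

/-- `Λ` is a top-`k` support of `v`: `|Λ| = k` and every entry of `v` inside `Λ`
dominates (in magnitude) every entry outside `Λ`. -/
def IsTopSupport {n : ℕ} (v : Fin n → ℝ) (k : ℕ) (Λ : Finset (Fin n)) : Prop :=
  Λ.card = k ∧ ∀ i ∈ Λ, ∀ j ∉ Λ, |v j| ≤ |v i|

/-- `x'` is a least-squares estimate of `y` on the support `Λ`. -/
def IsLSE {M N : ℕ} (Φ : Matrix (Fin M) (Fin N) ℝ) (y : Fin M → ℝ)
    (Λ : Finset (Fin N)) (x' : Fin N → ℝ) : Prop :=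
  suppF x' ⊆ Λ ∧ ∀ z : Fin N → ℝ, suppF z ⊆ Λ →
    l2norm (y - Φ.mulVec x') ≤ l2norm (y - Φ.mulVec z)

/-- for nested supports `Λᵢ ⊆ Λₗ`, the least-squares residual on the
larger support is smaller; moreover, when `y = Φx` and `Φ` satisfies the RIP of an
order `s ≥ |Λᵢ ∪ supp(x)|`, the difference of squared residuals is between `0` and
`(1 + δ_s)‖x'ᵢ − x‖²`. -/
theorem nested_lse_residuals {M N : ℕ} (Φ : Matrix (Fin M) (Fin N) ℝ)
    (y : Fin M → ℝ) (Λi Λl : Finset (Fin N)) (hsub : Λi ⊆ Λl)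
    (xi xl : Fin N → ℝ) (hi : IsLSE Φ y Λi xi) (hl : IsLSE Φ y Λl xl) :
    l2norm (y - Φ.mulVec xl) ≤ l2norm (y - Φ.mulVec xi) ∧
      ∀ (x : Fin N → ℝ) (s : ℕ) (δ : ℝ), y = Φ.mulVec x → HasRIC Φ s δ →
        (Λi ∪ suppF x).card ≤ s →
        0 ≤ (l2norm (y - Φ.mulVec xi)) ^ 2 - (l2norm (y - Φ.mulVec xl)) ^ 2 ∧
          (l2norm (y - Φ.mulVec xi)) ^ 2 - (l2norm (y - Φ.mulVec xl)) ^ 2 ≤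
            (1 + δ) * (l2norm (xi - x)) ^ 2 := by
  have hmain : l2norm (y - Φ.mulVec xl) ≤ l2norm (y - Φ.mulVec xi) :=
    hl.2 xi (hi.1.trans hsub)
  refine ⟨hmain, ?_⟩
  intro x s δ hy hric hcard
  have h0l : 0 ≤ l2norm (y - Φ.mulVec xl) := Real.sqrt_nonneg _
  have hsq : (l2norm (y - Φ.mulVec xl)) ^ 2 ≤ (l2norm (y - Φ.mulVec xi)) ^ 2 :=
    pow_le_pow_left₀ h0l hmain 2
  refine ⟨by linarith, ?_⟩
  have hsupp : suppF (xi - x) ⊆ Λi ∪ suppF x := by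
    intro j hj
    simp only [suppF, mem_filter, mem_univ, true_and, Pi.sub_apply] at hj
    by_cases h : xi j = 0
    · refine mem_union_right _ ?_
      simp only [suppF, mem_filter, mem_univ, true_and]
      intro h'; exact hj (by rw [h, h']; ring)
    · exact mem_union_left _ (hi.1 (by simp [suppF, h]))
  have hspar : sparsity (xi - x) ≤ s :=
    le_trans (Finset.card_le_card hsupp) hcard
  have hRIC := (hric.2 (xi - x) hspar).2
  have heq : Φ.mulVec (xi - x) = -(y - Φ.mulVec xi) := by
    rw [hy, Matrix.mulVec_sub]; ext j; simp
  have hnormeq : l2norm (Φ.mulVec (xi - x)) = l2norm (y - Φ.mulVec xi) := by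
    rw [heq]; unfold l2norm; congr 1; apply Finset.sum_congr rfl; intro j _; simp; ring
  rw [hnormeq] at hRIC
  nlinarith [sq_nonneg (l2norm (y - Φ.mulVec xl))]
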